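/- Let β ∈ ℝ with β ≠ 0, let h₀ : ℝ → ℝ, and let y ∈ ℝ; write h := h₀(y). The function x(t) := y + [(e^{−β h} − β t)·ln(e^{−β h} − β t) + β t + β h e^{−β h}]/β², defined for all t with e^{−β h} − β t > 0, satisfies x(0) = y and x'(t) = −ln(e^{−β h} − β t)/β at every t with e^{−β h} − β t > 0. -/

import Mathlib

/-- Section 6, characteristic ODE: with `h = h₀ y`, the curve
`x(t) = y + ((e^{-βh} - βt) ln(e^{-βh} - βt) + βt + βh e^{-βh})/β²` satisfies
`x 0 = y` and `x' t = -ln(e^{-βh} - βt)/β` wherever `e^{-βh} - βt > 0`. -/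
theorem stmt_13 (β : ℝ) (hβ : β ≠ 0) (h₀ : ℝ → ℝ) (y : ℝ) :
    y + ((Real.exp (-β * h₀ y) - β * 0) * Real.log (Real.exp (-β * h₀ y) - β * 0)
        + β * 0 + β * h₀ y * Real.exp (-β * h₀ y)) / β ^ 2 = y ∧
      ∀ t : ℝ, Real.exp (-β * h₀ y) - β * t > 0 →
        deriv (fun τ => y +
            ((Real.exp (-β * h₀ y) - β * τ) * Real.log (Real.exp (-β * h₀ y) - β * τ)
              + β * τ + β * h₀ y * Real.exp (-β * h₀ y)) / β ^ 2) t
          = -Real.log (Real.exp (-β * h₀ y) - β * t) / β := by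
  constructor
  · simp [Real.log_exp]
    left; ring
  · intro t ht
    set c := Real.exp (-β * h₀ y) with hc
    have hg : HasDerivAt (fun τ : ℝ => c - β * τ) (-β) t := by
      simpa using ((hasDerivAt_id t).const_mul β).const_sub c
    have hlog : HasDerivAt (fun τ : ℝ => Real.log (c - β * τ)) (-β / (c - β * t)) t :=
      by simpa [Function.comp_def, div_eq_inv_mul] using (Real.hasDerivAt_log ht.ne').comp t hg
    have hmul : HasDerivAt (fun τ : ℝ => (c - β * τ) * Real.log (c - β * τ))
        (-β * Real.log (c - β * t) + (c - β * t) * (-β / (c - β * t))) t := hg.mul hlog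
    have h2 : HasDerivAt (fun τ : ℝ =>
        y + ((c - β * τ) * Real.log (c - β * τ) + β * τ + β * h₀ y * c) / β ^ 2)
        (((-β * Real.log (c - β * t) + (c - β * t) * (-β / (c - β * t))) + β) / β ^ 2) t := by
      have := (((hmul.add ((hasDerivAt_id t).const_mul β)).add_const
        (β * h₀ y * c)).div_const (β ^ 2)).const_add y
      simpa using this
    rw [h2.deriv]
    field_simp
    ring
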